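/- arXiv:1009.2831 — 4 statements merged into one kernel-verified Lean document; each statement's English description precedes it below -/
import Mathlib

section
/- a^{(1)}_δ = ∏_{i=1}^{L-1}(2i+1)!, where δ = (L, L-1, ..., 1). -/
open Finset Nat

lemma asc_fact_aux (a : ℕ) : ∀ n : ℕ, a ! * ∏ i ∈ range n, (a + 1 + i) = (a + n)!
  | 0 => by simp
  | n + 1 => by
    rw [prod_range_succ, ← mul_assoc, asc_fact_aux a n, ← Nat.add_assoc,
      Nat.factorial_succ]
    ring

lemma step_nat (L : ℕ) : (L + 1) * ∏ i ∈ range L, ((L - i) * (L + 2 + i)) = (2 * L + 1)! := by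
  rw [prod_mul_distrib]
  have h1 : ∏ i ∈ range L, (L - i) = L ! := by
    rw [← Finset.prod_range_add_one_eq_factorial, ← prod_range_reflect]
    exact prod_congr rfl fun i hi => by
      have := mem_range.mp hi; omega
  have h2 : (L + 1)! * ∏ i ∈ range L, (L + 2 + i) = (2 * L + 1)! := by
    have := asc_fact_aux (L + 1) L
    have e : L + 1 + L = 2 * L + 1 := by ring
    rw [e] at this
    convert this using 3 with i
  rw [h1, ← h2, Nat.factorial_succ]
  try ring

lemma key_int (L : ℕ) :
    (∏ j ∈ range L, ((j : ℤ) + 1)) *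
      ∏ i ∈ range L, ∏ j ∈ Ioo i L, (((j : ℤ) + 1) ^ 2 - ((i : ℤ) + 1) ^ 2) =
    ∏ i ∈ range L, ((2 * i + 1)! : ℤ) := by
  induction L with
  | zero => simp
  | succ L ih =>
    have hinner : ∀ i ∈ range L,
        ∏ j ∈ Ioo i (L + 1), (((j : ℤ) + 1) ^ 2 - ((i : ℤ) + 1) ^ 2) =
        (∏ j ∈ Ioo i L, (((j : ℤ) + 1) ^ 2 - ((i : ℤ) + 1) ^ 2)) *
          (((L : ℤ) + 1) ^ 2 - ((i : ℤ) + 1) ^ 2) := by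
      intro i hi
      have hiL := mem_range.mp hi
      have : Ioo i (L + 1) = insert L (Ioo i L) := by
        ext a; simp [mem_Ioo, mem_insert]; omega
      rw [this, prod_insert (by simp [mem_Ioo])]
      ring
    rw [prod_range_succ, prod_range_succ, prod_range_succ, prod_congr rfl hinner,
      prod_mul_distrib]
    have hLterm : ∏ j ∈ Ioo L (L + 1), (((j : ℤ) + 1) ^ 2 - ((L : ℤ) + 1) ^ 2) = 1 := by
      have : Ioo L (L + 1) = (∅ : Finset ℕ) := by ext a; simp [mem_Ioo]
      rw [this, prod_empty]
    rw [hLterm, ← ih]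
    have hnew : ((L : ℤ) + 1) * ∏ i ∈ range L, (((L : ℤ) + 1) ^ 2 - ((i : ℤ) + 1) ^ 2) =
        ((2 * L + 1)! : ℤ) := by
      have hcast : ∀ i ∈ range L,
          ((L : ℤ) + 1) ^ 2 - ((i : ℤ) + 1) ^ 2 = (((L - i) * (L + 2 + i) : ℕ) : ℤ) := by
        intro i hi
        have hiL := mem_range.mp hi
        push_cast [Nat.cast_sub (le_of_lt hiL)]
        ring
      rw [prod_congr rfl hcast, ← Nat.cast_prod, ← step_nat L]
      push_cast
      ring
    rw [← hnew]
    ring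

lemma map_valEmbedding_Ioi {n : ℕ} (i : Fin n) :
    (Finset.Ioi i).map Fin.valEmbedding = Finset.Ioo (i : ℕ) n := by
  ext a
  simp only [Finset.mem_map, Finset.mem_Ioi, Finset.mem_Ioo, Fin.valEmbedding_apply,
    Fin.lt_iff_val_lt_val]
  constructor
  · rintro ⟨b, hb, rfl⟩; exact ⟨hb, b.isLt⟩
  · rintro ⟨h1, h2⟩; exact ⟨⟨a, h2⟩, h1, rfl⟩

/-- `a^{(1)}_δ = det[δ_j^{2(L-i)+1}] = ∏_{i=1}^{L-1} (2i+1)!`, where `δ_j = L-j+1`. -/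
theorem a1_delta_eval (L : ℕ) :
    Matrix.det (Matrix.of fun i j : Fin L =>
        ((L - (j : ℕ) : ℕ) : ℤ) ^ (2 * (L - 1 - (i : ℕ)) + 1)) =
      ∏ i ∈ Finset.Icc 1 (L - 1), (Nat.factorial (2 * i + 1) : ℤ) := by
  -- Step 1: reverse rows and columns
  rw [← Matrix.det_submatrix_equiv_self Fin.revPerm]
  have hentry : (Matrix.of fun i j : Fin L =>
        ((L - (j : ℕ) : ℕ) : ℤ) ^ (2 * (L - 1 - (i : ℕ)) + 1)).submatrix Fin.revPerm Fin.revPerm =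
      Matrix.of fun i j : Fin L => ((j : ℤ) + 1) * ((((j : ℤ) + 1) ^ 2) ^ (i : ℕ)) := by
    ext i j
    simp only [Matrix.submatrix_apply, Matrix.of_apply, Fin.revPerm_apply, Fin.val_rev]
    have hj : j.val < L := j.isLt
    have hi : i.val < L := i.isLt
    have h1 : L - (L - (j.val + 1)) = j.val + 1 := by omega
    have h2 : L - 1 - (L - (i.val + 1)) = i.val := by omega
    rw [h1, h2, pow_succ, pow_mul]
    push_cast
    ring
  rw [hentry, Matrix.det_mul_row (fun j : Fin L => ((j : ℤ) + 1))
    (fun i j : Fin L => ((((j : ℤ) + 1) ^ 2) ^ (i : ℕ)))]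
  have hvdm : (Matrix.det fun i j : Fin L => ((((j : ℤ) + 1) ^ 2) ^ (i : ℕ)) : ℤ) =
      Matrix.det (Matrix.vandermonde fun j : Fin L => ((j : ℤ) + 1) ^ 2) := by
    rw [← Matrix.det_transpose (Matrix.vandermonde _)]
    congr 1
  rw [hvdm, Matrix.det_vandermonde]
  -- Step 2: convert Fin products to range products
  have houter : ∏ i : Fin L, ∏ j ∈ Ioi i, (((j : ℤ) + 1) ^ 2 - ((i : ℤ) + 1) ^ 2) =
      ∏ i ∈ range L, ∏ j ∈ Ioo i L, (((j : ℤ) + 1) ^ 2 - ((i : ℤ) + 1) ^ 2) := by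
    rw [← Fin.prod_univ_eq_prod_range]
    refine prod_congr rfl fun i _ => ?_
    rw [← map_valEmbedding_Ioi i, prod_map]
    rfl
  have hbase : ∏ i : Fin L, ((i : ℤ) + 1) = ∏ j ∈ range L, ((j : ℤ) + 1) := by
    rw [← Fin.prod_univ_eq_prod_range]
  rw [houter, hbase, key_int]
  -- Step 3: identify the two index sets
  rcases Nat.eq_zero_or_pos L with hL | hL
  · subst hL; simp
  · obtain ⟨n, rfl⟩ := Nat.exists_eq_add_of_le hL
    rw [Nat.add_sub_cancel_left] at *
    rw [show 1 + n = n + 1 by ring, prod_range_succ']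
    have : Icc 1 n = Ico 1 (n + 1) := by rw [Finset.Ico_add_one_right_eq_Icc]
    rw [this, prod_Ico_eq_prod_range]
    simp [Nat.add_sub_cancel]
    exact prod_congr rfl fun i _ => by rw [Nat.add_comm i 1]
end

section
/- With δ = (L, ..., 1), the function φ_δ(z) = a^{(2)}_δ(z)/a^{(1)}_δ equals (z+1)(z-1)^{2L-1} / (z^L (2L-1)!). -/
open Finset Polynomial fwdDiff

lemma aux_taylor_coeff_top {p : ℝ[X]} {d : ℕ} (hp : p.natDegree ≤ d + 1) :
    ((Polynomial.taylor 1 p) - p).coeff d = (d+1 : ℝ) * p.coeff (d+1) := by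
  rw [Polynomial.coeff_sub, Polynomial.taylor_coeff]
  have h1 : (Polynomial.hasseDeriv d p).natDegree < 2 := by
    have := Polynomial.natDegree_hasseDeriv_le p d
    omega
  rw [Polynomial.eval_eq_sum_range' h1]
  rw [Finset.sum_range_succ, Finset.sum_range_one]
  simp only [Polynomial.hasseDeriv_coeff, zero_add, Nat.choose_self, Nat.cast_one, one_mul,
    pow_zero, pow_one, mul_one]
  rw [Nat.add_comm 1 d, Nat.choose_succ_self_right]
  push_cast
  ring

lemma aux_dq_natDegree {p : ℝ[X]} {d : ℕ} (hp : p.natDegree ≤ d + 1) :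
    ((Polynomial.taylor 1 p) - p).natDegree ≤ d := by
  rw [Polynomial.natDegree_le_iff_coeff_eq_zero]
  intro m hm
  rw [Polynomial.coeff_sub, Polynomial.taylor_coeff]
  rcases eq_or_lt_of_le (Nat.succ_le_of_lt hm) with h | h
  · -- m = d + 1
    have h2 : (Polynomial.hasseDeriv m p).natDegree < 1 := by
      have := Polynomial.natDegree_hasseDeriv_le p m
      omega
    rw [Polynomial.eval_eq_sum_range' h2]
    simp [Polynomial.hasseDeriv_coeff]
  · have hz : p.coeff m = 0 := Polynomial.coeff_eq_zero_of_natDegree_lt (by omega)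
    have h2 : (Polynomial.hasseDeriv m p).natDegree < 1 := by
      have := Polynomial.natDegree_hasseDeriv_le p m
      omega
    rw [Polynomial.eval_eq_sum_range' h2]
    simp [Polynomial.hasseDeriv_coeff, hz]

lemma fd_iter_poly : ∀ (d : ℕ) (p : ℝ[X]), p.natDegree ≤ d →
    (fwdDiff (1:ℝ))^[d] (fun x : ℝ => p.eval x) = fun _ => (d.factorial : ℝ) * p.coeff d := by
  intro d
  induction d with
  | zero =>
    intro p hp
    funext x
    rw [Polynomial.eq_C_of_natDegree_le_zero hp]
    simp
  | succ d ih =>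
    intro p hp
    have key : (fwdDiff (1:ℝ)) (fun x : ℝ => p.eval x)
        = fun x : ℝ => ((Polynomial.taylor 1 p) - p).eval x := by
      funext x
      simp [fwdDiff, Polynomial.taylor_eval]
    rw [Function.iterate_succ_apply, key, ih _ (aux_dq_natDegree hp),
      aux_taylor_coeff_top hp]
    funext x
    rw [Nat.factorial_succ]
    push_cast
    ring

lemma fd_sum_poly (M : ℕ) (p : ℝ[X]) (hp : p.natDegree ≤ M) :
    ∑ k ∈ Finset.range (M+1), (-1:ℝ)^k * (M.choose k : ℝ) * p.eval (k:ℝ)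
      = (-1:ℝ)^M * (M.factorial : ℝ) * p.coeff M := by
  have h'' : (fwdDiff (1:ℝ))^[M] (fun x : ℝ => p.eval x) 0
      = ∑ k ∈ Finset.range (M+1), (-1:ℝ)^(M-k) * (M.choose k : ℝ) * p.eval (k:ℝ) := by
    rw [fwdDiff_iter_eq_sum_shift]
    apply Finset.sum_congr rfl
    intro k hk
    simp only [zsmul_eq_mul, nsmul_eq_mul, mul_one, zero_add]
    push_cast
    ring
  rw [fd_iter_poly M p hp] at h''
  have h3 : (M.factorial : ℝ) * p.coeff M
      = ∑ k ∈ Finset.range (M+1), (-1:ℝ)^(M-k) * (M.choose k : ℝ) * p.eval (k:ℝ) := h''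
  have key : ∀ k ∈ Finset.range (M+1), (-1:ℝ)^k * (M.choose k:ℝ) * p.eval (k:ℝ)
      = ((-1:ℝ)^(M-k) * (M.choose k:ℝ) * p.eval (k:ℝ)) * (-1:ℝ)^M := by
    intro k hk; rw [Finset.mem_range] at hk
    have h4 : (-1:ℝ)^(M-k) * (-1:ℝ)^M = (-1:ℝ)^k := by
      rw [← pow_add, show M - k + M = k + 2*(M-k) by omega, pow_add, pow_mul]
      simp
    linear_combination (-((M.choose k:ℝ) * p.eval (k:ℝ))) * h4
  rw [Finset.sum_congr rfl key, ← Finset.sum_mul, ← h3]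
  ring

open Finset

lemma sum_reflectJ (L : ℕ) (hL : 1 ≤ L) (f : ℤ → ℝ) :
    ∑ j ∈ Finset.range L, (-1:ℝ)^j *
        (((2*L-1).choose (2*L-1-j) : ℝ) - ((2*L-1).choose (2*L-j) : ℝ)) * f ((L:ℤ) - j)
    = ∑ m ∈ Finset.range L, (-1:ℝ)^(L+m+1) *
        (((2*L-1).choose (L+m) : ℝ) - ((2*L-1).choose (L+m+1) : ℝ)) * f ((m:ℤ)+1) := by
  have hrefl := Finset.sum_range_reflect (fun j => (-1:ℝ)^j *
      (((2*L-1).choose (2*L-1-j) : ℝ) - ((2*L-1).choose (2*L-j) : ℝ)) * f ((L:ℤ) - j)) L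
  rw [← hrefl]
  apply Finset.sum_congr rfl
  intro m hm
  rw [Finset.mem_range] at hm
  have e1 : 2*L-1-(L-1-m) = L+m := by omega
  have e2 : 2*L-(L-1-m) = L+m+1 := by omega
  have e3 : ((L:ℤ) - ((L-1-m : ℕ) : ℤ)) = (m:ℤ)+1 := by omega
  have e4 : (-1:ℝ)^(L+m+1) = (-1:ℝ)^(L-1-m) := by
    rw [show L+m+1 = (L-1-m)+2*(m+1) by omega, pow_add, pow_mul]
    norm_num
  rw [e1, e2, e3, e4]

lemma sum_T (L : ℕ) (hL : 1 ≤ L) (f : ℤ → ℝ) (hodd : ∀ m : ℤ, f (-m) = - f m) :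
    ∑ m ∈ Finset.range L, (-1:ℝ)^(L+m+1) *
        (((2*L-1).choose (L+m) : ℝ) - ((2*L-1).choose (L+m+1) : ℝ)) * f ((m:ℤ)+1)
    = ∑ m ∈ Finset.range L, (-1:ℝ)^(L+m+1) * ((2*L-1).choose (L+m) : ℝ) *
        (f ((m:ℤ)+1) + f (m:ℤ)) := by
  have hf0 : f 0 = 0 := by
    have h := hodd 0
    simp only [neg_zero] at h
    linarith
  set G : ℕ → ℝ := fun m => (-1:ℝ)^(L+m) * ((2*L-1).choose (L+m) : ℝ) * f (m:ℤ) with hG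
  have hG0 : G 0 = 0 := by simp [hG, hf0]
  have hGL : G L = 0 := by
    simp only [hG]
    rw [Nat.choose_eq_zero_of_lt (by omega)]
    simp
  have key : ∑ m ∈ Finset.range L, G (m+1) = ∑ m ∈ Finset.range L, G m := by
    have h1 := Finset.sum_range_succ' G L
    have h2 := Finset.sum_range_succ G L
    rw [h2, hGL, add_zero, hG0, add_zero] at h1
    exact h1.symm
  have expand : ∀ m ∈ Finset.range L,
      (-1:ℝ)^(L+m+1) * (((2*L-1).choose (L+m) : ℝ) - ((2*L-1).choose (L+m+1) : ℝ)) * f ((m:ℤ)+1)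
      = ((-1:ℝ)^(L+m+1) * ((2*L-1).choose (L+m) : ℝ) * (f ((m:ℤ)+1) + f (m:ℤ)))
        + G m - G (m+1) := by
    intro m hm
    simp only [hG]
    have hp1 : (-1:ℝ)^(L+(m+1)) = -(-1:ℝ)^(L+m) := by
      rw [show L+(m+1) = (L+m)+1 by omega, pow_succ]; ring
    have hp2 : (-1:ℝ)^(L+m+1) = -(-1:ℝ)^(L+m) := by rw [pow_succ]; ring
    push_cast
    rw [hp1, hp2]
    ring
  rw [Finset.sum_congr rfl expand, Finset.sum_sub_distrib, Finset.sum_add_distrib, key]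
  ring

lemma sum_half (L : ℕ) (hL : 1 ≤ L) (f : ℤ → ℝ) (hodd : ∀ m : ℤ, f (-m) = - f m) :
    ∑ k ∈ Finset.range (2*L), (-1:ℝ)^(k+1) * ((2*L-1).choose k : ℝ) *
        (f ((k:ℤ)-L+1) + f ((k:ℤ)-L))
    = 2 * ∑ m ∈ Finset.range L, (-1:ℝ)^(L+m+1) * ((2*L-1).choose (L+m) : ℝ) *
        (f ((m:ℤ)+1) + f (m:ℤ)) := by
  have h2L : ∑ k ∈ Finset.range (2*L), (-1:ℝ)^(k+1) * ((2*L-1).choose k : ℝ) *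
        (f ((k:ℤ)-L+1) + f ((k:ℤ)-L))
      = ∑ k ∈ Finset.range L, (-1:ℝ)^(k+1) * ((2*L-1).choose k : ℝ) *
          (f ((k:ℤ)-L+1) + f ((k:ℤ)-L))
        + ∑ x ∈ Finset.range L, (-1:ℝ)^((L+x)+1) * ((2*L-1).choose (L+x) : ℝ) *
          (f (((L+x:ℕ):ℤ)-L+1) + f (((L+x:ℕ):ℤ)-L)) := by
    have hr := Finset.sum_range_add (fun k => (-1:ℝ)^(k+1) * ((2*L-1).choose k : ℝ) *
        (f ((k:ℤ)-L+1) + f ((k:ℤ)-L))) L L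
    rw [show L + L = 2*L by ring] at hr
    exact hr
  rw [h2L]
  have hsecond : ∀ x ∈ Finset.range L,
      (-1:ℝ)^((L+x)+1) * ((2*L-1).choose (L+x) : ℝ) *
        (f (((L+x:ℕ):ℤ)-L+1) + f (((L+x:ℕ):ℤ)-L))
      = (-1:ℝ)^(L+x+1) * ((2*L-1).choose (L+x) : ℝ) * (f ((x:ℤ)+1) + f (x:ℤ)) := by
    intro x hx
    have e1 : ((L+x:ℕ):ℤ) - L + 1 = (x:ℤ)+1 := by push_cast; ring
    have e2 : ((L+x:ℕ):ℤ) - L = (x:ℤ) := by push_cast; ring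
    rw [e1, e2]
  have hfirst : ∑ k ∈ Finset.range L, (-1:ℝ)^(k+1) * ((2*L-1).choose k : ℝ) *
        (f ((k:ℤ)-L+1) + f ((k:ℤ)-L))
      = ∑ m ∈ Finset.range L, (-1:ℝ)^(L+m+1) * ((2*L-1).choose (L+m) : ℝ) *
        (f ((m:ℤ)+1) + f (m:ℤ)) := by
    have hrefl := Finset.sum_range_reflect (fun k => (-1:ℝ)^(k+1) * ((2*L-1).choose k : ℝ) *
        (f ((k:ℤ)-L+1) + f ((k:ℤ)-L))) L
    rw [← hrefl]
    apply Finset.sum_congr rfl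
    intro m hm
    rw [Finset.mem_range] at hm
    have e1 : (((L-1-m:ℕ)):ℤ) - L + 1 = -(m:ℤ) := by omega
    have e2 : (((L-1-m:ℕ)):ℤ) - L = -((m:ℤ)+1) := by omega
    have e3 : (2*L-1).choose (L-1-m) = (2*L-1).choose (L+m) := by
      rw [show L-1-m = 2*L-1-(L+m) by omega, Nat.choose_symm (by omega)]
    have e4 : (-1:ℝ)^(L+m+1) = -(-1:ℝ)^((L-1-m)+1) := by
      rw [show L+m+1 = ((L-1-m)+1)+(2*m+1) by omega, pow_add]
      have h5 : (-1:ℝ)^(2*m+1) = -1 := by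
        rw [pow_succ, pow_mul]; norm_num
      rw [h5]; ring
    rw [e1, e2, e3, e4, hodd ((m:ℤ)), hodd ((m:ℤ)+1)]
    ring
  rw [hfirst, Finset.sum_congr rfl hsecond]
  ring

lemma sum_master (L : ℕ) (hL : 1 ≤ L) (f : ℤ → ℝ) (hodd : ∀ m : ℤ, f (-m) = - f m) :
    ∑ j ∈ Finset.range L, (-1:ℝ)^j *
        (((2*L-1).choose (2*L-1-j) : ℝ) - ((2*L-1).choose (2*L-j) : ℝ)) * f ((L:ℤ) - j)
    = (1/2) * ∑ k ∈ Finset.range (2*L), (-1:ℝ)^(k+1) * ((2*L-1).choose k : ℝ) *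
        (f ((k:ℤ)-L+1) + f ((k:ℤ)-L)) := by
  rw [sum_reflectJ L hL f, sum_T L hL f hodd, sum_half L hL f hodd]
  ring

open Finset

lemma binom_alt (L : ℕ) (hL : 1 ≤ L) (w : ℝ) :
    ∑ k ∈ Finset.range (2*L), (-1:ℝ)^(k+1) * ((2*L-1).choose k : ℝ) * w^k
      = -(1-w)^(2*L-1) := by
  have hb := add_pow (-w) 1 (2*L-1)
  have h2L : 2*L-1+1 = 2*L := by omega
  rw [h2L] at hb
  have hstep : ∀ k ∈ Finset.range (2*L),
      (-1:ℝ)^(k+1) * ((2*L-1).choose k : ℝ) * w^k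
      = -((-w)^k * 1^(2*L-1-k) * ((2*L-1).choose k : ℝ)) := by
    intro k hk
    rw [neg_pow, one_pow, pow_succ]
    ring
  rw [Finset.sum_congr rfl hstep, Finset.sum_neg_distrib, ← hb]
  ring_nf

lemma e12 (L r : ℕ) (hL : 1 ≤ L) (hr : r ≤ L-1) :
    ∑ k ∈ Finset.range (2*L), (-1:ℝ)^(k+1) * ((2*L-1).choose k : ℝ) *
        (((k:ℝ)-L+1)^(2*r+1) + ((k:ℝ)-L)^(2*r+1))
    = if r = L-1 then 2*((2*L-1).factorial : ℝ) else 0 := by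
  set p : Polynomial ℝ := (Polynomial.X - Polynomial.C ((L:ℝ)-1))^(2*r+1)
      + (Polynomial.X - Polynomial.C (L:ℝ))^(2*r+1) with hp
  have hd1 : ((Polynomial.X - Polynomial.C ((L:ℝ)-1))^(2*r+1)).natDegree = 2*r+1 := by
    rw [Polynomial.natDegree_pow, Polynomial.natDegree_X_sub_C, mul_one]
  have hd2 : ((Polynomial.X - Polynomial.C ((L:ℝ)))^(2*r+1)).natDegree = 2*r+1 := by
    rw [Polynomial.natDegree_pow, Polynomial.natDegree_X_sub_C, mul_one]
  have hdeg : p.natDegree ≤ 2*r+1 := by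
    refine le_trans (Polynomial.natDegree_add_le _ _) ?_
    rw [hd1, hd2]; omega
  have heval : ∀ k : ℕ, p.eval (k:ℝ) = ((k:ℝ)-L+1)^(2*r+1) + ((k:ℝ)-L)^(2*r+1) := by
    intro k
    simp only [hp, Polynomial.eval_add, Polynomial.eval_pow, Polynomial.eval_sub,
      Polynomial.eval_X, Polynomial.eval_C]
    ring_nf
  have hM : 2*r+1 ≤ 2*L-1 := by omega
  have hModd : Odd (2*L-1) := ⟨L-1, by omega⟩
  have h2L : 2*L = (2*L-1)+1 := by omega
  have hsum : ∑ k ∈ Finset.range (2*L), (-1:ℝ)^(k+1) * ((2*L-1).choose k : ℝ) *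
        (((k:ℝ)-L+1)^(2*r+1) + ((k:ℝ)-L)^(2*r+1))
      = -(∑ k ∈ Finset.range ((2*L-1)+1), (-1:ℝ)^k * ((2*L-1).choose k : ℝ) * p.eval (k:ℝ)) := by
    rw [← h2L, ← Finset.sum_neg_distrib]
    apply Finset.sum_congr rfl
    intro k hk
    rw [heval k, pow_succ]
    ring
  rw [hsum, fd_sum_poly (2*L-1) p (le_trans hdeg hM), Odd.neg_one_pow hModd]
  by_cases hcase : r = L-1
  · have hrM : 2*r+1 = 2*L-1 := by omega
    have hc1 : ((Polynomial.X - Polynomial.C ((L:ℝ)-1))^(2*r+1)).coeff (2*L-1) = 1 := by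
      rw [← hrM]
      have h := ((Polynomial.monic_X_sub_C ((L:ℝ)-1)).pow (2*r+1)).coeff_natDegree
      rwa [hd1] at h
    have hc2 : ((Polynomial.X - Polynomial.C ((L:ℝ)))^(2*r+1)).coeff (2*L-1) = 1 := by
      rw [← hrM]
      have h := ((Polynomial.monic_X_sub_C ((L:ℝ))).pow (2*r+1)).coeff_natDegree
      rwa [hd2] at h
    have hcoeff : p.coeff (2*L-1) = 2 := by
      rw [hp, Polynomial.coeff_add, hc1, hc2]; norm_num
    rw [hcoeff, if_pos hcase]
    ring
  · have hlt : 2*r+1 < 2*L-1 := by omega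
    have hcoeff : p.coeff (2*L-1) = 0 :=
      Polynomial.coeff_eq_zero_of_natDegree_lt (by omega)
    rw [hcoeff, if_neg hcase]
    ring

lemma sum_z (L : ℕ) (hL : 1 ≤ L) (z : ℝ) (hz : z ≠ 0) :
    ∑ k ∈ Finset.range (2*L), (-1:ℝ)^(k+1) * ((2*L-1).choose k : ℝ) *
        ((z^((k:ℤ)-L+1) - z^(-((k:ℤ)-L+1))) + (z^((k:ℤ)-L) - z^(-((k:ℤ)-L))))
    = 2*((z+1)*(z-1)^(2*L-1)) / z^L := by
  have hzL : z^L ≠ 0 := pow_ne_zero _ hz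
  have hModd : Odd (2*L-1) := ⟨L-1, by omega⟩
  have hpow : z^(2*L-1) * z = z^L * z^L := by
    rw [← pow_succ, show 2*L-1+1 = L+L by omega, pow_add]
  have expand : ∀ k ∈ Finset.range (2*L),
      (-1:ℝ)^(k+1) * ((2*L-1).choose k : ℝ) *
        ((z^((k:ℤ)-L+1) - z^(-((k:ℤ)-L+1))) + (z^((k:ℤ)-L) - z^(-((k:ℤ)-L))))
      = (z/(z^L) + 1/(z^L)) * ((-1:ℝ)^(k+1) * ((2*L-1).choose k : ℝ) * z^k)
        - (z^L/z + z^L) * ((-1:ℝ)^(k+1) * ((2*L-1).choose k : ℝ) * (z⁻¹)^k) := by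
    intro k hk
    have hzk : z^k ≠ 0 := pow_ne_zero _ hz
    have h1 : z^((k:ℤ)-L+1) = z^k * z / z^L := by
      rw [zpow_add₀ hz, zpow_sub₀ hz, zpow_natCast, zpow_natCast, zpow_one]
      ring
    have h2 : z^(-((k:ℤ)-L+1)) = z^L / (z^k * z) := by
      rw [zpow_neg, h1, inv_div]
    have h3 : z^((k:ℤ)-L) = z^k / z^L := by
      rw [zpow_sub₀ hz, zpow_natCast, zpow_natCast]
    have h4 : z^(-((k:ℤ)-L)) = z^L / z^k := by
      rw [zpow_neg, h3, inv_div]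
    rw [h1, h2, h3, h4, inv_pow]
    field_simp
    ring
  rw [Finset.sum_congr rfl expand, Finset.sum_sub_distrib, ← Finset.mul_sum, ← Finset.mul_sum,
    binom_alt L hL z, binom_alt L hL z⁻¹]
  have h5 : (1 - z⁻¹) = (z-1)/z := by field_simp
  have h6 : (1 - z⁻¹)^(2*L-1) = (z-1)^(2*L-1) * z / (z^L*z^L) := by
    rw [h5, div_pow, ← hpow]
    rw [div_eq_div_iff (pow_ne_zero _ hz) (by exact mul_ne_zero (pow_ne_zero _ hz) hz)]
    ring
  have h7 : (1-z)^(2*L-1) = -(z-1)^(2*L-1) := by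
    rw [show (1:ℝ)-z = -(z-1) by ring, Odd.neg_pow hModd]
  rw [h6, h7]
  field_simp
  ring

open Finset Matrix

lemma detA1_ne_zero (L : ℕ) (hL : 1 ≤ L) :
    (Matrix.of fun i j : Fin L =>
      ((L - (j : ℕ) : ℕ) : ℝ) ^ (2 * (L - 1 - (i : ℕ)) + 1)).det ≠ 0 := by
  have hrw : (Matrix.of fun i j : Fin L =>
        ((L - (j : ℕ) : ℕ) : ℝ) ^ (2 * (L - 1 - (i : ℕ)) + 1))
      = Matrix.of (fun i j : Fin L => ((L - (j : ℕ) : ℕ) : ℝ) *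
          (Matrix.of (fun i j : Fin L => (((L - (j : ℕ) : ℕ) : ℝ)^2) ^ (L - 1 - (i : ℕ))) i j)) := by
    ext i j
    simp only [Matrix.of_apply]
    rw [← pow_mul, mul_comm ((L - (j:ℕ) : ℕ) : ℝ), ← pow_succ]
  rw [hrw, Matrix.det_mul_row]
  apply mul_ne_zero
  · apply Finset.prod_ne_zero_iff.mpr
    intro j _
    have : (0:ℝ) < ((L - (j:ℕ) : ℕ) : ℝ) := by
      have : 1 ≤ L - (j:ℕ) := by have := j.isLt; omega
      exact_mod_cast Nat.lt_of_lt_of_le Nat.zero_lt_one this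
    linarith
  · -- Vandermonde argument
    set w : Fin L → ℝ := fun j => (((L - (j:ℕ) : ℕ) : ℝ))^2 with hw
    have hsub : (Matrix.of (fun i j : Fin L => (((L - (j : ℕ) : ℕ) : ℝ)^2) ^ (L - 1 - (i : ℕ)))).submatrix
        (Fin.revPerm : Equiv.Perm (Fin L)) id = (Matrix.vandermonde w)ᵀ := by
      ext i j
      simp only [Matrix.submatrix_apply, Matrix.of_apply, Matrix.transpose_apply,
        Matrix.vandermonde_apply, id_eq, Fin.revPerm_apply]
      congr 1
      have h1 : ((Fin.rev i : Fin L) : ℕ) = L - 1 - (i:ℕ) := by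
        rw [Fin.val_rev]; omega
      rw [h1]
      have := i.isLt; omega
    have hvdm : (Matrix.vandermonde w).det ≠ 0 := by
      rw [Matrix.det_vandermonde]
      apply Finset.prod_ne_zero_iff.mpr
      intro i _
      apply Finset.prod_ne_zero_iff.mpr
      intro j hj
      rw [Finset.mem_Ioi] at hj
      have hij : (i:ℕ) < (j:ℕ) := hj
      have hjL := j.isLt
      have hnat : (L - (j:ℕ))^2 < (L - (i:ℕ))^2 :=
        Nat.pow_lt_pow_left (by omega) (by norm_num)
      have : w j < w i := by
        simp only [hw]
        have h1 : (((L - (j:ℕ) : ℕ) : ℝ))^2 = (((L - (j:ℕ))^2 : ℕ) : ℝ) := by push_cast; ring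
        have h2 : (((L - (i:ℕ) : ℕ) : ℝ))^2 = (((L - (i:ℕ))^2 : ℕ) : ℝ) := by push_cast; ring
        rw [h1, h2]
        exact_mod_cast hnat
      have : w j - w i ≠ 0 := by linarith
      exact this
    have hperm := Matrix.det_permute (Fin.revPerm : Equiv.Perm (Fin L))
      (Matrix.of (fun i j : Fin L => (((L - (j : ℕ) : ℕ) : ℝ)^2) ^ (L - 1 - (i : ℕ))))
    rw [hsub, Matrix.det_transpose] at hperm
    intro h0
    rw [h0, mul_zero] at hperm
    exact hvdm hperm

lemma mulvec_lemma (L : ℕ) [NeZero L] (hL : 1 ≤ L) (i : Fin L) :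
    ∑ j : Fin L, ((L - (j:ℕ) : ℕ) : ℝ) ^ (2 * (L - 1 - (i:ℕ)) + 1) *
      ((-1:ℝ)^(j:ℕ) * (((2*L-1).choose (2*L-1-(j:ℕ)) : ℝ) - ((2*L-1).choose (2*L-(j:ℕ)) : ℝ))
        / ((2*L-1).factorial : ℝ))
    = if i = 0 then 1 else 0 := by
  have hfact : ((2*L-1).factorial : ℝ) ≠ 0 := Nat.cast_ne_zero.mpr (Nat.factorial_ne_zero _)
  have hodd : ∀ m : ℤ, (fun m : ℤ => ((m:ℝ))^(2*(L - 1 - (i:ℕ))+1)) (-m)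
      = - (fun m : ℤ => ((m:ℝ))^(2*(L - 1 - (i:ℕ))+1)) m := by
    intro m
    simp only []
    push_cast
    exact Odd.neg_pow ⟨L - 1 - (i:ℕ), by ring⟩ _
  have hstep1 : ∑ j : Fin L, ((L - (j:ℕ) : ℕ) : ℝ) ^ (2 * (L - 1 - (i:ℕ)) + 1) *
      ((-1:ℝ)^(j:ℕ) * (((2*L-1).choose (2*L-1-(j:ℕ)) : ℝ) - ((2*L-1).choose (2*L-(j:ℕ)) : ℝ))
        / ((2*L-1).factorial : ℝ))
      = ∑ j ∈ Finset.range L, ((-1:ℝ)^j *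
          (((2*L-1).choose (2*L-1-j) : ℝ) - ((2*L-1).choose (2*L-j) : ℝ)) *
          (fun m : ℤ => ((m:ℝ))^(2*(L - 1 - (i:ℕ))+1)) ((L:ℤ) - j)) * ((2*L-1).factorial : ℝ)⁻¹ := by
    rw [Fin.sum_univ_eq_sum_range (fun j => ((L - j : ℕ) : ℝ) ^ (2 * (L - 1 - (i:ℕ)) + 1) *
      ((-1:ℝ)^j * (((2*L-1).choose (2*L-1-j) : ℝ) - ((2*L-1).choose (2*L-j) : ℝ))
        / ((2*L-1).factorial : ℝ))) L]
    apply Finset.sum_congr rfl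
    intro j hj
    rw [Finset.mem_range] at hj
    simp only []
    have harg : ((L:ℤ) - j) = ((L - j : ℕ) : ℤ) := by omega
    rw [harg]
    push_cast
    ring
  rw [hstep1, ← Finset.sum_mul,
    sum_master L hL (fun m : ℤ => ((m:ℝ))^(2*(L - 1 - (i:ℕ))+1)) hodd]
  have hfk : ∀ k ∈ Finset.range (2*L),
      (-1:ℝ)^(k+1) * ((2*L-1).choose k : ℝ) *
        ((fun m : ℤ => ((m:ℝ))^(2*(L - 1 - (i:ℕ))+1)) ((k:ℤ)-L+1)
          + (fun m : ℤ => ((m:ℝ))^(2*(L - 1 - (i:ℕ))+1)) ((k:ℤ)-L))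
      = (-1:ℝ)^(k+1) * ((2*L-1).choose k : ℝ) *
        (((k:ℝ)-L+1)^(2*(L - 1 - (i:ℕ))+1) + ((k:ℝ)-L)^(2*(L - 1 - (i:ℕ))+1)) := by
    intro k hk
    simp only []
    push_cast
    ring_nf
  rw [Finset.sum_congr rfl hfk, e12 L (L - 1 - (i:ℕ)) hL (by omega)]
  have hiff : (i = (0:Fin L)) ↔ (L - 1 - (i:ℕ) = L-1) := by
    rw [Fin.ext_iff]
    simp only [Fin.val_zero]
    have := i.isLt
    omega
  by_cases hcase : i = 0
  · rw [if_pos (hiff.mp hcase), if_pos hcase]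
    field_simp
  · rw [if_neg (fun h => hcase (hiff.mpr h)), if_neg hcase]
    ring

lemma final_sum (L : ℕ) (hL : 1 ≤ L) (z : ℝ) (hz : z ≠ 0) :
    ∑ j : Fin L, (z ^ (((L - (j:ℕ) : ℕ)) : ℤ) - z ^ (-((L - (j:ℕ) : ℕ) : ℤ))) *
      ((-1:ℝ)^(j:ℕ) * (((2*L-1).choose (2*L-1-(j:ℕ)) : ℝ) - ((2*L-1).choose (2*L-(j:ℕ)) : ℝ))
        / ((2*L-1).factorial : ℝ))
    = (z + 1) * (z - 1) ^ (2*L-1) / (z^L * ((2*L-1).factorial : ℝ)) := by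
  have hfact : ((2*L-1).factorial : ℝ) ≠ 0 := Nat.cast_ne_zero.mpr (Nat.factorial_ne_zero _)
  have hzL : z^L ≠ 0 := pow_ne_zero _ hz
  have hodd : ∀ m : ℤ, (fun m : ℤ => z^m - z^(-m)) (-m)
      = - (fun m : ℤ => z^m - z^(-m)) m := by
    intro m
    simp only [neg_neg]
    ring
  have hstep1 : ∑ j : Fin L, (z ^ (((L - (j:ℕ) : ℕ)) : ℤ) - z ^ (-((L - (j:ℕ) : ℕ) : ℤ))) *
      ((-1:ℝ)^(j:ℕ) * (((2*L-1).choose (2*L-1-(j:ℕ)) : ℝ) - ((2*L-1).choose (2*L-(j:ℕ)) : ℝ))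
        / ((2*L-1).factorial : ℝ))
      = ∑ j ∈ Finset.range L, ((-1:ℝ)^j *
          (((2*L-1).choose (2*L-1-j) : ℝ) - ((2*L-1).choose (2*L-j) : ℝ)) *
          (fun m : ℤ => z^m - z^(-m)) ((L:ℤ) - j)) * ((2*L-1).factorial : ℝ)⁻¹ := by
    rw [Fin.sum_univ_eq_sum_range (fun j => (z ^ (((L - j : ℕ)) : ℤ) - z ^ (-((L - j : ℕ) : ℤ))) *
      ((-1:ℝ)^j * (((2*L-1).choose (2*L-1-j) : ℝ) - ((2*L-1).choose (2*L-j) : ℝ))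
        / ((2*L-1).factorial : ℝ))) L]
    apply Finset.sum_congr rfl
    intro j hj
    rw [Finset.mem_range] at hj
    simp only []
    have harg : ((L:ℤ) - j) = ((L - j : ℕ) : ℤ) := by omega
    rw [harg]
    ring
  rw [hstep1, ← Finset.sum_mul, sum_master L hL (fun m : ℤ => z^m - z^(-m)) hodd]
  have hfk : ∀ k ∈ Finset.range (2*L),
      (-1:ℝ)^(k+1) * ((2*L-1).choose k : ℝ) *
        ((fun m : ℤ => z^m - z^(-m)) ((k:ℤ)-L+1) + (fun m : ℤ => z^m - z^(-m)) ((k:ℤ)-L))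
      = (-1:ℝ)^(k+1) * ((2*L-1).choose k : ℝ) *
        ((z^((k:ℤ)-L+1) - z^(-((k:ℤ)-L+1))) + (z^((k:ℤ)-L) - z^(-((k:ℤ)-L)))) := by
    intro k hk
    simp only []
  rw [Finset.sum_congr rfl hfk, sum_z L hL z hz]
  all_goals field_simp
  all_goals ring

/-- `φ_δ(z) = a^{(2)}_δ(z)/a^{(1)}_δ = (z+1)(z-1)^{2L-1}/(z^L (2L-1)!)`, where
`δ_j = L - j + 1` (1-based). -/
theorem phi_delta_eval (L : ℕ) (hL : 1 ≤ L) (z : ℝ) (hz : z ≠ 0) :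
    Matrix.det (Matrix.of fun i j : Fin L =>
        if (i : ℕ) = 0 then
          z ^ (((L - (j : ℕ) : ℕ)) : ℤ) - z ^ (-((L - (j : ℕ) : ℕ) : ℤ))
        else ((L - (j : ℕ) : ℕ) : ℝ) ^ (2 * (L - 1 - (i : ℕ)) + 1)) /
      Matrix.det (Matrix.of fun i j : Fin L =>
        ((L - (j : ℕ) : ℕ) : ℝ) ^ (2 * (L - 1 - (i : ℕ)) + 1)) =
      (z + 1) * (z - 1) ^ (2 * L - 1) /
        (z ^ L * (Nat.factorial (2 * L - 1) : ℝ)) := by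
  classical
  haveI : NeZero L := ⟨by omega⟩
  set A1 : Matrix (Fin L) (Fin L) ℝ := Matrix.of (fun i j : Fin L =>
    ((L - (j : ℕ) : ℕ) : ℝ) ^ (2 * (L - 1 - (i : ℕ)) + 1)) with hA1
  set u : Fin L → ℝ := fun j : Fin L =>
    z ^ (((L - (j : ℕ) : ℕ)) : ℤ) - z ^ (-((L - (j : ℕ) : ℕ) : ℤ)) with hu
  set c : Fin L → ℝ := fun j : Fin L =>
    (-1:ℝ)^(j:ℕ) * (((2*L-1).choose (2*L-1-(j:ℕ)) : ℝ) - ((2*L-1).choose (2*L-(j:ℕ)) : ℝ))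
      / ((2*L-1).factorial : ℝ) with hc
  have hdet1 : A1.det ≠ 0 := by rw [hA1]; exact detA1_ne_zero L hL
  have hupdate : (Matrix.of fun i j : Fin L =>
        if (i : ℕ) = 0 then
          z ^ (((L - (j : ℕ) : ℕ)) : ℤ) - z ^ (-((L - (j : ℕ) : ℕ) : ℤ))
        else ((L - (j : ℕ) : ℕ) : ℝ) ^ (2 * (L - 1 - (i : ℕ)) + 1))
      = A1.updateRow 0 u := by
    ext i j
    rw [Matrix.updateRow_apply, Matrix.of_apply]
    by_cases h : i = (0 : Fin L)
    · have h' : (i:ℕ) = 0 := by rw [h]; rfl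
      rw [if_pos h', if_pos h, hu]
    · have h' : (i:ℕ) ≠ 0 := by
        intro hcon
        exact h (Fin.ext hcon)
      rw [if_neg h', if_neg h, hA1]
      rfl
  have hmv : A1.mulVec c = Pi.single (0 : Fin L) 1 := by
    funext i
    have h1 : A1.mulVec c i = ∑ j : Fin L, A1 i j * c j := by
      simp [Matrix.mulVec, dotProduct]
    rw [h1, Pi.single_apply, hA1, hc]
    simp only [Matrix.of_apply]
    exact mulvec_lemma L hL i
  have hadj : ∀ j : Fin L, A1.adjugate j 0 = A1.det * c j := by
    have h1 : A1.adjugate.mulVec (A1.mulVec c) = A1.det • c := by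
      rw [Matrix.mulVec_mulVec, Matrix.adjugate_mul, Matrix.smul_mulVec,
        Matrix.one_mulVec]
    rw [hmv, Matrix.mulVec_single] at h1
    intro j
    have h2 := congrFun h1 j
    simpa using h2
  have hdet2 : (A1.updateRow 0 u).det = A1.det * ∑ j : Fin L, u j * c j := by
    rw [Matrix.det_eq_sum_mul_adjugate_row (A1.updateRow 0 u) 0, Finset.mul_sum]
    apply Finset.sum_congr rfl
    intro j _
    have e1 : (A1.updateRow 0 u) 0 j = u j := by rw [Matrix.updateRow_self]
    have e2 : (A1.updateRow 0 u).adjugate j 0 = A1.adjugate j 0 := by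
      rw [Matrix.adjugate_apply, Matrix.adjugate_apply]
      congr 1
      ext i' j'
      by_cases h : i' = (0 : Fin L)
      · simp [Matrix.updateRow_apply, h]
      · simp [Matrix.updateRow_apply, h]
    rw [e1, e2, hadj j]
    ring
  rw [hupdate, hdet2, mul_div_cancel_left₀ _ hdet1]
  rw [hu, hc]
  exact final_sum L hL z hz
end

section
/- The factorized polynomial q_λ(z) = φ_μ(z)/φ_δ(z) satisfies the ordinary differential equation ∏_{n=1}^L (Z² - μ_n²) q_λ(z) = 0 for z ≠ 0, ±1, where Z = D_z + (Lz² + 2Lz - 2z + L)/(z² - 1). -/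
/-- The single-variable function `φ_ν(z) = Σ_j (z^{ν_j} - z^{-ν_j})/(ν_j ∏_{i≠j}(ν_j² - ν_i²))`. -/
noncomputable def phiFun {L : ℕ} (ν : Fin L → ℕ) : ℝ → ℝ :=
  fun z => ∑ j : Fin L,
    (z ^ ((ν j : ℤ)) - z ^ (-(ν j : ℤ))) /
      ((ν j : ℝ) * ∏ i ∈ Finset.univ.erase j, ((ν j : ℝ) ^ 2 - (ν i : ℝ) ^ 2))

/-- The operator `Z = D_z + (Lz² + 2Lz - 2z + L)/(z² - 1)` with `D_z = z d/dz`. -/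
noncomputable def Zop (L : ℕ) (f : ℝ → ℝ) : ℝ → ℝ :=
  fun z => z * deriv f z +
    (((L : ℝ) * z ^ 2 + 2 * (L : ℝ) * z - 2 * z + (L : ℝ)) / (z ^ 2 - 1)) * f z

namespace QAux
open Finset

/-- Laurent combination with exponents `±μ j`. -/
noncomputable def lc {L : ℕ} (μ : Fin L → ℕ) (a b : Fin L → ℝ) : ℝ → ℝ :=
  fun z => ∑ j : Fin L, (a j * z ^ (μ j : ℤ) + b j * z ^ (-(μ j : ℤ)))

lemma lc_hasDerivAt {L : ℕ} (μ : Fin L → ℕ) (a b : Fin L → ℝ) {z : ℝ} (hz : z ≠ 0) :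
    HasDerivAt (lc μ a b)
      (lc μ (fun j => (μ j : ℝ) * a j) (fun j => -(μ j : ℝ) * b j) z / z) z := by
  have h : ∀ j : Fin L, HasDerivAt (fun w : ℝ => a j * w ^ (μ j : ℤ) + b j * w ^ (-(μ j : ℤ)))
      (a j * ((μ j : ℝ) * z ^ ((μ j : ℤ) - 1)) + b j * (((-(μ j : ℤ) : ℤ) : ℝ) * z ^ (-(μ j : ℤ) - 1))) z :=
    fun j => ((hasDerivAt_zpow (μ j : ℤ) z (Or.inl hz)).const_mul (a j)).add
      ((hasDerivAt_zpow (-(μ j : ℤ)) z (Or.inl hz)).const_mul (b j))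
  have : HasDerivAt (lc μ a b) _ z := HasDerivAt.fun_sum (fun j (_ : j ∈ Finset.univ) => h j)
  convert this using 1
  unfold lc
  rw [Finset.sum_div]
  refine Finset.sum_congr rfl fun j _ => ?_
  rw [zpow_sub₀ hz, zpow_sub₀ hz, zpow_one]
  push_cast
  field_simp

lemma zop_lc {L : ℕ} (μ : Fin L → ℕ) (Φ : ℝ → ℝ) (a b : Fin L → ℝ) (f : ℝ → ℝ)
    (hf : ∀ w : ℝ, w ≠ 0 → w ≠ 1 → w ≠ -1 → f w = lc μ a b w / Φ w)
    {z : ℝ} (hz0 : z ≠ 0) (hz1 : z ≠ 1) (hzm1 : z ≠ -1)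
    (d : ℝ) (hΦd : HasDerivAt Φ d z) (hΦ0 : Φ z ≠ 0)
    (hrel : ((L : ℝ) * z ^ 2 + 2 * (L : ℝ) * z - 2 * z + (L : ℝ)) * Φ z = z * d * (z ^ 2 - 1)) :
    Zop L f z = lc μ (fun j => (μ j : ℝ) * a j) (fun j => -(μ j : ℝ) * b j) z / Φ z := by
  have hev : f =ᶠ[nhds z] fun w => lc μ a b w / Φ w := by
    filter_upwards [eventually_ne_nhds hz0, eventually_ne_nhds hz1, eventually_ne_nhds hzm1]
      with w h0 h1 hm1
    exact hf w h0 h1 hm1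
  have hN := lc_hasDerivAt μ a b hz0
  have hq := hN.div hΦd hΦ0
  have hderiv : deriv f z =
      (lc μ (fun j => (μ j : ℝ) * a j) (fun j => -(μ j : ℝ) * b j) z / z * Φ z -
        lc μ a b z * d) / Φ z ^ 2 := hev.deriv_eq.trans hq.deriv
  have hz2 : z ^ 2 - 1 ≠ 0 := by
    intro h
    have h2 : (z - 1) * (z + 1) = 0 := by ring_nf; linarith
    rcases mul_eq_zero.1 h2 with h3 | h3
    · exact hz1 (by linarith)
    · exact hzm1 (by linarith)
  unfold Zop
  rw [hderiv, hf z hz0 hz1 hzm1]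
  have hnum : ((L : ℝ) * z ^ 2 + 2 * (L : ℝ) * z - 2 * z + (L : ℝ)) = z * d * (z ^ 2 - 1) / Φ z :=
    (eq_div_iff hΦ0).2 hrel
  rw [hnum]
  field_simp
  ring

noncomputable def Rfun (L : ℕ) : ℝ → ℝ :=
  fun z => (z - 1) ^ (2 * L - 1) * (z + 1) / (z ^ L * (Nat.factorial (2 * L - 1) : ℝ))


lemma Rfun_facts (L : ℕ) (hL : 1 ≤ L) {z : ℝ} (hz0 : z ≠ 0) (hz1 : z ≠ 1) (hzm1 : z ≠ -1) :
    ∃ d, HasDerivAt (Rfun L) d z ∧ Rfun L z ≠ 0 ∧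
      ((L : ℝ) * z ^ 2 + 2 * (L : ℝ) * z - 2 * z + (L : ℝ)) * Rfun L z = z * d * (z ^ 2 - 1) := by
  obtain ⟨m, rfl⟩ : ∃ m, L = m + 1 := ⟨L - 1, by omega⟩
  have hexp : 2 * (m + 1) - 1 = 2 * m + 1 := by omega
  set C : ℝ := (Nat.factorial (2 * (m + 1) - 1) : ℝ) with hC
  have hCne : C ≠ 0 := by positivity
  have hz1' : z - 1 ≠ 0 := sub_ne_zero.2 hz1
  have hzm1' : z + 1 ≠ 0 := by intro h; exact hzm1 (by linarith)
  have hRe : Rfun (m + 1) = fun w => (w - 1) ^ (2 * m + 1) * (w + 1) / (w ^ (m + 1) * C) := by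
    funext w; rw [Rfun, hexp, hC, hexp]
  have h1 : HasDerivAt (fun w : ℝ => w - 1) 1 z := (hasDerivAt_id z).sub_const 1
  have h2 : HasDerivAt (fun w : ℝ => (w - 1) ^ (2 * m + 1))
      ((2 * m + 1 : ℕ) * (z - 1) ^ (2 * m) * 1) z := by
    have := h1.fun_pow (2 * m + 1)
    simpa using this
  have h3 : HasDerivAt (fun w : ℝ => (w - 1) ^ (2 * m + 1) * (w + 1))
      ((2 * m + 1 : ℕ) * (z - 1) ^ (2 * m) * 1 * (z + 1) + (z - 1) ^ (2 * m + 1) * 1) z :=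
    h2.mul ((hasDerivAt_id z).add_const 1)
  have hden : HasDerivAt (fun w : ℝ => w ^ (m + 1) * C) ((m + 1 : ℕ) * z ^ m * C) z := by
    have := (hasDerivAt_pow (m + 1) z).mul_const C
    simpa using this
  have hdenne : z ^ (m + 1) * C ≠ 0 := mul_ne_zero (pow_ne_zero _ hz0) hCne
  have hd := h3.fun_div hden hdenne
  rw [← hRe] at hd
  refine ⟨_, hd, ?_, ?_⟩
  · rw [hRe]
    exact div_ne_zero (mul_ne_zero (pow_ne_zero _ hz1') hzm1') hdenne
  · rw [hRe]
    have e1 : (z - 1) ^ (2 * m + 1) = (z - 1) ^ (2 * m) * (z - 1) := pow_succ _ _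
    have e2 : z ^ (m + 1) = z ^ m * z := pow_succ _ _
    have hvne : z ^ m ≠ 0 := pow_ne_zero _ hz0
    have hune : (z - 1) ^ (2 * m) ≠ 0 := pow_ne_zero _ hz1'
    push_cast
    rw [e1, e2]
    field_simp
    ring

lemma prodA (k : ℕ) : ∀ n : ℕ, n ≤ k →
    (∏ m ∈ Icc 1 n, (((k : ℝ) + 1) ^ 2 - (m : ℝ) ^ 2)) *
      (Nat.factorial (k - n) : ℝ) * (Nat.factorial (k + 1) : ℝ)
    = (Nat.factorial k : ℝ) * (Nat.factorial (k + 1 + n) : ℝ) := by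
  intro n
  induction n with
  | zero => simp
  | succ n ih =>
    intro h
    have IH := ih (by omega)
    rw [Finset.prod_Icc_succ_top (by omega : 1 ≤ n + 1)]
    have e1 : k - n = (k - (n + 1)) + 1 := by omega
    have e2 : (Nat.factorial (k - n) : ℝ)
        = ((k : ℝ) - (n : ℝ)) * (Nat.factorial (k - (n + 1)) : ℝ) := by
      rw [e1, Nat.factorial_succ]
      have : ((k - (n + 1) : ℕ) : ℝ) = (k : ℝ) - (n : ℝ) - 1 := by
        rw [Nat.cast_sub h]; push_cast; ring
      push_cast [this]
      ring
    have e3 : (Nat.factorial (k + 1 + (n + 1)) : ℝ)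
        = ((k : ℝ) + (n : ℝ) + 2) * (Nat.factorial (k + 1 + n) : ℝ) := by
      have : k + 1 + (n + 1) = (k + 1 + n) + 1 := by omega
      rw [this, Nat.factorial_succ]
      push_cast
      ring
    rw [e3]
    push_cast
    linear_combination ((k : ℝ) + n + 2) * IH
      + (-((k : ℝ) + n + 2) * (∏ m ∈ Icc 1 n, (((k : ℝ) + 1) ^ 2 - (m : ℝ) ^ 2))
          * (Nat.factorial (k + 1) : ℝ)) * e2

lemma prod_erase_eq (k : ℕ) (hk : 1 ≤ k) : ∀ L : ℕ, k ≤ L →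
    ∏ m ∈ (Icc 1 L).erase k, ((k : ℝ) ^ 2 - (m : ℝ) ^ 2)
      = (-1 : ℝ) ^ (L - k) * (Nat.factorial (L - k) : ℝ) * (Nat.factorial (L + k) : ℝ)
        / (2 * (k : ℝ) ^ 2) := by
  intro L hkL
  induction L, hkL using Nat.le_induction with
  | base =>
    obtain ⟨k', rfl⟩ : ∃ k', k = k' + 1 := ⟨k - 1, by omega⟩
    have hset : (Icc 1 (k' + 1)).erase (k' + 1) = Icc 1 k' := by
      ext m; simp only [Finset.mem_erase, Finset.mem_Icc]; omega
    rw [hset]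
    have E := prodA k' k' le_rfl
    simp only [Nat.sub_self, Nat.factorial_zero, Nat.cast_one, mul_one, pow_zero, one_mul] at E ⊢
    have h2 : ((k' + 1 + (k' + 1)).factorial : ℝ)
        = 2 * ((k' : ℝ) + 1) * ((k' + 1 + k').factorial : ℝ) := by
      rw [show k' + 1 + (k' + 1) = (k' + 1 + k') + 1 by omega, Nat.factorial_succ]
      push_cast; ring
    have h3 : ((k' + 1).factorial : ℝ) = ((k' : ℝ) + 1) * (k'.factorial : ℝ) := by
      rw [Nat.factorial_succ]; push_cast; ring
    rw [h2, eq_div_iff (by positivity : 2 * ((k' + 1 : ℕ) : ℝ) ^ 2 ≠ 0)]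
    rw [h3] at E
    apply mul_right_cancel₀ (b := (k'.factorial : ℝ)) (by positivity)
    push_cast at E ⊢
    linear_combination (2 * ((k' : ℝ) + 1)) * E
  | succ L hkL ih =>
    have hset : (Icc 1 (L + 1)).erase k = insert (L + 1) ((Icc 1 L).erase k) := by
      ext m
      simp only [Finset.mem_erase, Finset.mem_Icc, Finset.mem_insert]
      omega
    have hnotmem : (L + 1) ∉ (Icc 1 L).erase k := by
      simp only [Finset.mem_erase, Finset.mem_Icc]; omega
    rw [hset, Finset.prod_insert hnotmem, ih]
    have c1 : ((k : ℝ) ^ 2 - ((L + 1 : ℕ) : ℝ) ^ 2)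
        = -(((L + 1 - k : ℕ) : ℝ) * ((L + 1 + k : ℕ) : ℝ)) := by
      rw [Nat.cast_sub (by omega)]; push_cast; ring
    have c2 : ((L + 1 - k).factorial : ℝ) = ((L + 1 - k : ℕ) : ℝ) * ((L - k).factorial : ℝ) := by
      rw [show L + 1 - k = (L - k) + 1 by omega, Nat.factorial_succ]
      rw [show (L - k) + 1 = L + 1 - k by omega]; push_cast; ring
    have c3 : ((L + 1 + k).factorial : ℝ) = ((L + 1 + k : ℕ) : ℝ) * ((L + k).factorial : ℝ) := by
      rw [show L + 1 + k = (L + k) + 1 by omega, Nat.factorial_succ]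
      rw [show (L + k) + 1 = L + 1 + k by omega]; push_cast; ring
    have c4 : (-1 : ℝ) ^ (L + 1 - k) = -(-1 : ℝ) ^ (L - k) := by
      rw [show L + 1 - k = (L - k) + 1 by omega, pow_succ]; ring
    push_cast at c1 ⊢
    rw [c2, c3, c4, c1]
    field_simp
    push_cast
    ring

lemma I1 (L : ℕ) (hL : 1 ≤ L) (z : ℝ) :
    ∑ j ∈ range L, (-1 : ℝ) ^ j * (Nat.choose (2 * L - 1) j : ℝ) * (z ^ (2 * L - 1 - j) - z ^ j)
      = (z - 1) ^ (2 * L - 1) := by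
  have hadd : (z - 1) ^ (2 * L - 1)
      = ∑ i ∈ range (2 * L - 1 + 1), z ^ i * (-1 : ℝ) ^ (2 * L - 1 - i)
          * (Nat.choose (2 * L - 1) i : ℝ) := by
    rw [sub_eq_add_neg]
    exact add_pow z (-1) (2 * L - 1)
  rw [hadd, show 2 * L - 1 + 1 = L + L by omega, Finset.sum_range_add]
  have hrefl : (∑ i ∈ range L, z ^ (L + i) * (-1 : ℝ) ^ (2 * L - 1 - (L + i))
      * (Nat.choose (2 * L - 1) (L + i) : ℝ))
      = ∑ j ∈ range L, z ^ (L + (L - 1 - j)) * (-1 : ℝ) ^ (2 * L - 1 - (L + (L - 1 - j)))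
          * (Nat.choose (2 * L - 1) (L + (L - 1 - j)) : ℝ) :=
    (Finset.sum_range_reflect (fun i => z ^ (L + i) * (-1 : ℝ) ^ (2 * L - 1 - (L + i))
      * (Nat.choose (2 * L - 1) (L + i) : ℝ)) L).symm
  rw [hrefl, ← Finset.sum_add_distrib]
  refine (Finset.sum_congr rfl fun j hj => ?_).symm
  have hjL : j < L := Finset.mem_range.1 hj
  have e1 : L + (L - 1 - j) = 2 * L - 1 - j := by omega
  have e2 : 2 * L - 1 - (2 * L - 1 - j) = j := by omega
  have e3 : Nat.choose (2 * L - 1) (2 * L - 1 - j) = Nat.choose (2 * L - 1) j :=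
    Nat.choose_symm (by omega)
  have e4 : (-1 : ℝ) ^ (2 * L - 1 - j) = -(-1 : ℝ) ^ j := by
    have : (2 * L - 1 - j) + j = 2 * L - 1 := by omega
    have h5 : (-1 : ℝ) ^ ((2 * L - 1 - j) + j) = (-1 : ℝ) ^ (2 * L - 1) := by rw [this]
    rw [pow_add] at h5
    have h6 : (-1 : ℝ) ^ (2 * L - 1) = -1 := by
      have : 2 * L - 1 = 2 * (L - 1) + 1 := by omega
      rw [this, pow_succ, pow_mul]
      norm_num
    have h7 : ((-1 : ℝ) ^ j) * ((-1 : ℝ) ^ j) = 1 := by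
      rw [← pow_add]
      exact Even.neg_one_pow ⟨j, rfl⟩
    have h56 := h5.trans h6
    linear_combination ((-1 : ℝ) ^ j) * h56 - ((-1 : ℝ) ^ (2 * L - 1 - j)) * h7
  rw [e1, e2, e3, e4]
  ring

lemma bCC (L j : ℕ) (h1 : 1 ≤ j) (h2 : j < L) :
    2 * ((L : ℝ) - (j : ℝ)) * (Nat.factorial (2 * L - 1) : ℝ)
      = ((Nat.choose (2 * L - 1) j : ℝ) - (Nat.choose (2 * L - 1) (j - 1) : ℝ))
        * ((Nat.factorial j : ℝ) * (Nat.factorial (2 * L - j) : ℝ)) := by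
  have E1n := Nat.choose_mul_factorial_mul_factorial (show j ≤ 2 * L - 1 by omega)
  have E2n := Nat.choose_mul_factorial_mul_factorial (show j - 1 ≤ 2 * L - 1 by omega)
  rw [show 2 * L - 1 - (j - 1) = 2 * L - j by omega] at E2n
  have E1 : (Nat.choose (2 * L - 1) j : ℝ) * (Nat.factorial j : ℝ)
      * (Nat.factorial (2 * L - 1 - j) : ℝ) = (Nat.factorial (2 * L - 1) : ℝ) := by
    exact_mod_cast congrArg (Nat.cast : ℕ → ℝ) E1n
  have E2 : (Nat.choose (2 * L - 1) (j - 1) : ℝ) * (Nat.factorial (j - 1) : ℝ)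
      * (Nat.factorial (2 * L - j) : ℝ) = (Nat.factorial (2 * L - 1) : ℝ) := by
    exact_mod_cast congrArg (Nat.cast : ℕ → ℝ) E2n
  have f1 : (Nat.factorial (2 * L - j) : ℝ)
      = (2 * (L : ℝ) - (j : ℝ)) * (Nat.factorial (2 * L - 1 - j) : ℝ) := by
    rw [show 2 * L - j = (2 * L - 1 - j) + 1 by omega, Nat.factorial_succ]
    have : ((2 * L - 1 - j : ℕ) : ℝ) = 2 * (L : ℝ) - 1 - (j : ℝ) := by
      rw [Nat.cast_sub (by omega), Nat.cast_sub (by omega)]; push_cast; ring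
    push_cast [this]; ring
  have f2 : (Nat.factorial j : ℝ) = (j : ℝ) * (Nat.factorial (j - 1) : ℝ) := by
    rw [show j = (j - 1) + 1 by omega, Nat.factorial_succ,
      show (j - 1) + 1 = j by omega]
    have : ((j - 1 : ℕ) : ℝ) = (j : ℝ) - 1 := by
      rw [Nat.cast_sub (by omega)]; push_cast; ring
    push_cast [this]; ring
  have hF1 : (0:ℝ) < (Nat.factorial j : ℝ) := by exact_mod_cast Nat.factorial_pos j
  have hF2 : (0:ℝ) < (Nat.factorial (2 * L - 1 - j) : ℝ) := by
    exact_mod_cast Nat.factorial_pos _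
  have hF3 : (0:ℝ) < (Nat.factorial (j - 1) : ℝ) := by exact_mod_cast Nat.factorial_pos _
  have hF4 : (0:ℝ) < (Nat.factorial (2 * L - j) : ℝ) := by exact_mod_cast Nat.factorial_pos _
  have hCj : (Nat.choose (2 * L - 1) j : ℝ)
      = (Nat.factorial (2 * L - 1) : ℝ) / ((Nat.factorial j : ℝ) * (Nat.factorial (2 * L - 1 - j) : ℝ)) := by
    rw [eq_div_iff (by positivity)]; linear_combination E1
  have hCj1 : (Nat.choose (2 * L - 1) (j - 1) : ℝ)
      = (Nat.factorial (2 * L - 1) : ℝ) / ((Nat.factorial (j - 1) : ℝ) * (Nat.factorial (2 * L - j) : ℝ)) := by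
    rw [eq_div_iff (by positivity)]; linear_combination E2
  rw [hCj, hCj1, f1, f2]
  have hj : (0:ℝ) < (j:ℝ) := by exact_mod_cast h1
  have hLj : (0:ℝ) < 2 * (L : ℝ) - (j : ℝ) := by
    have : (j:ℝ) < L := by exact_mod_cast h2
    nlinarith [this]
  field_simp
  ring

lemma sum_id (L : ℕ) (hL : 1 ≤ L) (z : ℝ) :
    ∑ j ∈ range L, (-1 : ℝ) ^ j
        * (2 * ((L : ℝ) - (j : ℝ)) * (Nat.factorial (2 * L - 1) : ℝ)
            / ((Nat.factorial j : ℝ) * (Nat.factorial (2 * L - j) : ℝ)))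
        * (z ^ (2 * L - j) - z ^ j)
      = (z - 1) ^ (2 * L - 1) * (z + 1) := by
  set G : ℕ → ℝ := fun i =>
    (if i = 0 then 0 else (-1 : ℝ) ^ (i + 1) * (Nat.choose (2 * L - 1) (i - 1) : ℝ)
      * (z ^ (2 * L - i) - z ^ i)) with hG
  have hterm : ∀ j ∈ range L,
      (-1 : ℝ) ^ j
        * (2 * ((L : ℝ) - (j : ℝ)) * (Nat.factorial (2 * L - 1) : ℝ)
            / ((Nat.factorial j : ℝ) * (Nat.factorial (2 * L - j) : ℝ)))
        * (z ^ (2 * L - j) - z ^ j)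
      = (z + 1) * ((-1 : ℝ) ^ j * (Nat.choose (2 * L - 1) j : ℝ)
          * (z ^ (2 * L - 1 - j) - z ^ j))
        + (G j - G (j + 1)) := by
    intro j hj
    have hjL : j < L := Finset.mem_range.1 hj
    have hpow : z ^ (2 * L - j) = z ^ (2 * L - 1 - j) * z := by
      rw [← pow_succ, show 2 * L - 1 - j + 1 = 2 * L - j by omega]
    rcases Nat.eq_zero_or_pos j with rfl | hj1
    · have hfne : ((Nat.factorial 0 : ℝ) * (Nat.factorial (2 * L - 0) : ℝ)) ≠ 0 := by positivity
      have hco : 2 * ((L : ℝ) - ((0 : ℕ) : ℝ)) * (Nat.factorial (2 * L - 1) : ℝ)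
          / ((Nat.factorial 0 : ℝ) * (Nat.factorial (2 * L - 0) : ℝ)) = 1 := by
        rw [div_eq_one_iff_eq hfne]
        simp only [Nat.cast_zero, sub_zero, Nat.sub_zero, Nat.factorial_zero, Nat.cast_one,
          one_mul]
        rw [show 2 * L = (2 * L - 1) + 1 by omega, Nat.factorial_succ]
        have h21 : ((2 * L - 1 : ℕ) : ℝ) = 2 * (L : ℝ) - 1 := by
          rw [Nat.cast_sub (by omega)]; push_cast; ring
        push_cast [h21]; ring
      rw [hco]
      have hG1 : G 1 = (-1 : ℝ) ^ 2 * (Nat.choose (2 * L - 1) 0 : ℝ)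
          * (z ^ (2 * L - 1) - z ^ 1) := by
        rw [hG]; simp only [if_neg (Nat.one_ne_zero)]
      have hG0 : G 0 = 0 := if_pos rfl
      rw [hG0, hG1, hpow]
      norm_num
      ring
    · have hb := bCC L j hj1 hjL
      have hGj : G j = (-1 : ℝ) ^ (j + 1) * (Nat.choose (2 * L - 1) (j - 1) : ℝ)
          * (z ^ (2 * L - j) - z ^ j) := by
        rw [hG]; simp only [if_neg (by omega : j ≠ 0)]
      have hGj1 : G (j + 1) = (-1 : ℝ) ^ (j + 2) * (Nat.choose (2 * L - 1) j : ℝ)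
          * (z ^ (2 * L - 1 - j) - z ^ (j + 1)) := by
        rw [hG]; simp only [if_neg (by omega : j + 1 ≠ 0)]
        rw [show j + 1 - 1 = j by omega, show j + 1 + 1 = j + 2 by rfl,
          show 2 * L - (j + 1) = 2 * L - 1 - j by omega]
      rw [hGj, hGj1, hpow]
      have hfne : ((Nat.factorial j : ℝ) * (Nat.factorial (2 * L - j) : ℝ)) ≠ 0 := by positivity
      field_simp
      linear_combination ((-1 : ℝ) ^ j * (z ^ (2 * L - 1 - j) * z - z ^ j)) * hb
  rw [Finset.sum_congr rfl hterm, Finset.sum_add_distrib, Finset.sum_range_sub' G L]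
  rw [← Finset.mul_sum, I1 L hL z]
  have hGL : G L = 0 := by
    rw [hG]; simp only [if_neg (by omega : L ≠ 0)]
    rw [show 2 * L - L = L by omega]; ring
  have hG0 : G 0 = 0 := if_pos rfl
  rw [hGL, hG0]; ring

lemma phi_delta_closed (L : ℕ) (hL : 1 ≤ L) (z : ℝ) (hz : z ≠ 0) :
    phiFun (fun j : Fin L => L - (j : ℕ)) z = Rfun L z := by
  rw [phiFun]
  have hfact : (0:ℝ) < (Nat.factorial (2 * L - 1) : ℝ) := by exact_mod_cast Nat.factorial_pos _
  have hne : z ^ L * (Nat.factorial (2 * L - 1) : ℝ) ≠ 0 :=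
    mul_ne_zero (pow_ne_zero _ hz) (ne_of_gt hfact)
  have hinner : ∀ j : Fin L,
      (∏ i ∈ Finset.univ.erase j,
        (((L - (j : ℕ) : ℕ) : ℝ) ^ 2 - ((L - (i : ℕ) : ℕ) : ℝ) ^ 2))
      = ∏ m ∈ (Icc 1 L).erase (L - (j : ℕ)),
          (((L - (j : ℕ) : ℕ) : ℝ) ^ 2 - (m : ℝ) ^ 2) := by
    intro j
    have hjL := j.isLt
    refine Finset.prod_bij' (fun i _ => L - (i : ℕ))
      (fun m hm => (⟨L - m, by
        have h1 := Finset.mem_erase.1 hm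
        have h2 := Finset.mem_Icc.1 h1.2
        omega⟩ : Fin L)) ?_ ?_ ?_ ?_ ?_
    · intro i hi
      have h1 := Finset.mem_erase.1 hi
      have hij : (i : ℕ) ≠ (j : ℕ) := fun h => h1.1 (Fin.ext h)
      have hiL := i.isLt
      simp only [Finset.mem_erase, Finset.mem_Icc]
      omega
    · intro m hm
      have h1 := Finset.mem_erase.1 hm
      have h2 := Finset.mem_Icc.1 h1.2
      refine Finset.mem_erase.2 ⟨?_, Finset.mem_univ _⟩
      intro h
      apply h1.1
      have h3 : (L - m : ℕ) = (j : ℕ) := by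
        have := congrArg Fin.val h
        simpa using this
      omega
    · intro i hi
      have hiL := i.isLt
      exact Fin.ext (by simp; omega)
    · intro m hm
      have h1 := Finset.mem_erase.1 hm
      have h2 := Finset.mem_Icc.1 h1.2
      simp
      omega
    · intro i hi; rfl
  calc
    (∑ j : Fin L,
      (z ^ (((L - (j : ℕ) : ℕ)) : ℤ) - z ^ (-((L - (j : ℕ) : ℕ) : ℤ))) /
        (((L - (j : ℕ) : ℕ) : ℝ) * ∏ i ∈ Finset.univ.erase j,
          (((L - (j : ℕ) : ℕ) : ℝ) ^ 2 - ((L - (i : ℕ) : ℕ) : ℝ) ^ 2)))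
      = ∑ j ∈ range L,
        (z ^ ((L - j : ℕ) : ℤ) - z ^ (-((L - j : ℕ) : ℤ))) /
          (((L - j : ℕ) : ℝ) * ∏ m ∈ (Icc 1 L).erase (L - j),
            (((L - j : ℕ) : ℝ) ^ 2 - (m : ℝ) ^ 2)) := by
        rw [Finset.sum_congr rfl (fun j _ => by rw [hinner j])]
        exact Fin.sum_univ_eq_sum_range (fun j =>
          (z ^ ((L - j : ℕ) : ℤ) - z ^ (-((L - j : ℕ) : ℤ))) /
          (((L - j : ℕ) : ℝ) * ∏ m ∈ (Icc 1 L).erase (L - j),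
            (((L - j : ℕ) : ℝ) ^ 2 - (m : ℝ) ^ 2))) L
    _ = Rfun L z := by
        rw [Rfun, eq_div_iff hne, Finset.sum_mul, ← sum_id L hL z]
        refine Finset.sum_congr rfl fun j hj => ?_
        have hjL : j < L := Finset.mem_range.1 hj
        rw [prod_erase_eq (L - j) (by omega) L (by omega)]
        rw [show L - (L - j) = j by omega, show L + (L - j) = 2 * L - j by omega]
        have hs : (-1 : ℝ) ^ j * (-1 : ℝ) ^ j = 1 := by
          rw [← pow_add]; exact Even.neg_one_pow ⟨j, rfl⟩
        have hzL : (z : ℝ) ^ L ≠ 0 := pow_ne_zero _ hz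
        have hp1 : z ^ ((L - j : ℕ) : ℤ) = z ^ (2 * L - j) / z ^ L := by
          rw [eq_div_iff hzL, ← zpow_natCast z L, ← zpow_natCast z (2 * L - j),
            ← zpow_add₀ hz]
          congr 1
          omega
        have hp2 : z ^ (-((L - j : ℕ) : ℤ)) = z ^ j / z ^ L := by
          rw [eq_div_iff hzL, ← zpow_natCast z L, ← zpow_natCast z j, ← zpow_add₀ hz]
          congr 1
          omega
        have hcast : ((L - j : ℕ) : ℝ) = (L : ℝ) - (j : ℝ) := by
          rw [Nat.cast_sub (by omega)]
        have hk0 : ((L : ℝ) - (j : ℝ)) ≠ 0 := by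
          have : (j : ℝ) < L := by exact_mod_cast hjL
          linarith
        have hFj : (0:ℝ) < (Nat.factorial j : ℝ) := by exact_mod_cast Nat.factorial_pos _
        have hF2 : (0:ℝ) < (Nat.factorial (2 * L - j) : ℝ) := by
          exact_mod_cast Nat.factorial_pos _
        have hsne : (-1 : ℝ) ^ j ≠ 0 := by
          intro h; have := hs; rw [h] at this; simpa using this
        rw [hp1, hp2, hcast]
        rcases Nat.even_or_odd j with hpar | hpar
        · rw [hpar.neg_one_pow]
          field_simp
        · rw [hpar.neg_one_pow]
          field_simp


end QAux

open QAux in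
/-- The separated polynomial `q_λ(z) = φ_μ(z)/φ_δ(z)` satisfies
`∏_{n=1}^L (Z² - μ_n²) q_λ(z) = 0` for `z ≠ 0, ±1`, with `δ_j = L - j + 1`. -/
theorem q_lambda_ode (L : ℕ) (hL : 1 ≤ L) (μ : Fin L → ℕ)
    (hpos : ∀ i, 0 < μ i) (hanti : ∀ i j : Fin L, i < j → μ j < μ i)
    (z : ℝ) (hz0 : z ≠ 0) (hz1 : z ≠ 1) (hzm1 : z ≠ -1) :
    ((List.finRange L).foldr
        (fun n (f : ℝ → ℝ) =>
          fun w => Zop L (Zop L f) w - (μ n : ℝ) ^ 2 * f w)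
        (fun w => phiFun μ w / phiFun (fun j : Fin L => L - (j : ℕ)) w)) z = 0 := by
  have hclosed : ∀ w : ℝ, w ≠ 0 → phiFun (fun j : Fin L => L - (j : ℕ)) w = Rfun L w :=
    fun w hw => phi_delta_closed L hL w hw
  set Φ : ℝ → ℝ := phiFun (fun j : Fin L => L - (j : ℕ)) with hΦdef
  have hfacts : ∀ w : ℝ, w ≠ 0 → w ≠ 1 → w ≠ -1 → ∃ d, HasDerivAt Φ d w ∧ Φ w ≠ 0 ∧
      ((L : ℝ) * w ^ 2 + 2 * (L : ℝ) * w - 2 * w + (L : ℝ)) * Φ w = w * d * (w ^ 2 - 1) := by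
    intro w h0 h1 hm1
    obtain ⟨d, hd, hne, hrel⟩ := Rfun_facts L hL h0 h1 hm1
    have hev : Φ =ᶠ[nhds w] Rfun L := by
      filter_upwards [eventually_ne_nhds h0] with x hx
      exact hclosed x hx
    exact ⟨d, hd.congr_of_eventuallyEq hev, by rw [hclosed w h0]; exact hne,
      by rw [hclosed w h0]; exact hrel⟩
  set a0 : Fin L → ℝ :=
    fun j => 1 / ((μ j : ℝ) * ∏ i ∈ Finset.univ.erase j, ((μ j : ℝ) ^ 2 - (μ i : ℝ) ^ 2)) with ha0
  have hbase : ∀ w : ℝ, phiFun μ w = lc μ a0 (fun j => -a0 j) w := by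
    intro w
    unfold phiFun lc
    refine Finset.sum_congr rfl fun j _ => ?_
    simp only [div_eq_mul_inv, one_div]
    ring
  have key : ∀ l : List (Fin L), ∀ w : ℝ, w ≠ 0 → w ≠ 1 → w ≠ -1 →
      (l.foldr (fun n (f : ℝ → ℝ) => fun w => Zop L (Zop L f) w - (μ n : ℝ) ^ 2 * f w)
        (fun w => phiFun μ w / Φ w)) w
        = lc μ (fun j => (l.map fun n => (μ j : ℝ) ^ 2 - (μ n : ℝ) ^ 2).prod * a0 j)
               (fun j => -((l.map fun n => (μ j : ℝ) ^ 2 - (μ n : ℝ) ^ 2).prod * a0 j)) w / Φ w := by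
    intro l
    induction l with
    | nil =>
      intro w h0 h1 hm1
      simp only [List.foldr_nil, List.map_nil, List.prod_nil, one_mul, hbase w]
    | cons n t ih =>
      intro w h0 h1 hm1
      set A : Fin L → ℝ := fun j => (t.map fun n => (μ j : ℝ) ^ 2 - (μ n : ℝ) ^ 2).prod * a0 j
        with hA
      have h1Z : ∀ v : ℝ, v ≠ 0 → v ≠ 1 → v ≠ -1 →
          Zop L (t.foldr (fun n (f : ℝ → ℝ) => fun w => Zop L (Zop L f) w - (μ n : ℝ) ^ 2 * f w)
            (fun w => phiFun μ w / Φ w)) v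
          = lc μ (fun j => (μ j : ℝ) * A j) (fun j => -(μ j : ℝ) * (-A j)) v / Φ v := by
        intro v v0 v1 vm1
        obtain ⟨d, hd, hne, hrel⟩ := hfacts v v0 v1 vm1
        exact zop_lc μ Φ A (fun j => -A j) _ ih v0 v1 vm1 d hd hne hrel
      have h2Z : ∀ v : ℝ, v ≠ 0 → v ≠ 1 → v ≠ -1 →
          Zop L (Zop L (t.foldr (fun n (f : ℝ → ℝ) =>
              fun w => Zop L (Zop L f) w - (μ n : ℝ) ^ 2 * f w)
            (fun w => phiFun μ w / Φ w))) v
          = lc μ (fun j => (μ j : ℝ) * ((μ j : ℝ) * A j))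
              (fun j => -(μ j : ℝ) * (-(μ j : ℝ) * (-A j))) v / Φ v := by
        intro v v0 v1 vm1
        obtain ⟨d, hd, hne, hrel⟩ := hfacts v v0 v1 vm1
        exact zop_lc μ Φ _ _ _ h1Z v0 v1 vm1 d hd hne hrel
      simp only [List.foldr_cons]
      rw [h2Z w h0 h1 hm1, ih w h0 h1 hm1, mul_div_assoc', div_sub_div_same]
      congr 1
      unfold lc
      rw [Finset.mul_sum, ← Finset.sum_sub_distrib]
      refine Finset.sum_congr rfl fun j _ => ?_
      simp only [List.map_cons, List.prod_cons, hA]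
      ring
  have hfin := key (List.finRange L) z hz0 hz1 hzm1
  rw [hfin]
  have hcoef : ∀ j : Fin L, ((List.finRange L).map fun n => (μ j : ℝ) ^ 2 - (μ n : ℝ) ^ 2).prod = 0 := by
    intro j
    apply List.prod_eq_zero
    exact List.mem_map.2 ⟨j, List.mem_finRange j, by ring⟩
  have : lc μ (fun j => ((List.finRange L).map fun n => (μ j : ℝ) ^ 2 - (μ n : ℝ) ^ 2).prod * a0 j)
      (fun j => -(((List.finRange L).map fun n => (μ j : ℝ) ^ 2 - (μ n : ℝ) ^ 2).prod * a0 j)) z = 0 := by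
    unfold lc
    refine Finset.sum_eq_zero fun j _ => ?_
    simp only [hcoef j, zero_mul, neg_zero, add_zero]
  rw [this, zero_div]
end

section
/- Column combination identity: for each fixed r in {1,...,L}, a_μ(x_1,...,x_L) = (-1)^{r-1} [ ∏_{l=1}^L x_l^{μ_r} · det_{L-1}[x_{i+1}^{-μ_r}(x_{i+1}^{μ_j} - x_{i+1}^{-μ_j}) - x_i^{-μ_r}(x_i^{μ_j} - x_i^{-μ_j})]_{i≠L, j≠r} − ∏_{l=1}^L x_l^{-μ_r} · det_{L-1}[x_{i+1}^{μ_r}(x_{i+1}^{μ_j} - x_{i+1}^{-μ_j}) - x_i^{μ_r}(x_i^{μ_j} - x_i^{-μ_j})]_{i≠L, j≠r} ]. -/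
open Matrix

private lemma det_ones_col {n : ℕ} {F : Type*} [CommRing F]
    (N : Matrix (Fin (n + 1)) (Fin (n + 1)) F) (h : ∀ i, N i 0 = 1) :
    N.det = Matrix.det (Matrix.of fun i j : Fin n =>
      N i.succ j.succ - N i.castSucc j.succ) := by
  have hdet : N.det = Matrix.det (Matrix.of fun i j =>
      Fin.cases (motive := fun _ => F) (N 0 j) (fun k => N k.succ j - N k.castSucc j) i) := by
    refine Matrix.det_eq_of_forall_row_eq_smul_add_pred (fun _ => (1 : F))
      (fun j => ?_) (fun i j => ?_)
    · simp
    · simp only [Matrix.of_apply, Fin.cases_succ, one_mul]; ring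
  rw [hdet, Matrix.det_succ_column_zero, Fin.sum_univ_succ]
  have h2 : ∀ i : Fin n, (Matrix.of fun i j =>
      Fin.cases (motive := fun _ => F) (N 0 j)
        (fun k => N k.succ j - N k.castSucc j) i) i.succ 0 = 0 := by
    intro i; simp [h]
  rw [Finset.sum_eq_zero (fun i _ => by rw [h2 i]; ring)]
  simp only [Matrix.of_apply, Fin.cases_zero, h, Fin.val_zero, pow_zero, one_mul, mul_one,
    add_zero]
  congr 1

private lemma det_factor_col {n : ℕ} {F : Type*} [Field F]
    (x : Fin (n + 1) → F) (hx : ∀ i, x i ≠ 0) (c : ℤ) (M : Matrix (Fin (n + 1)) (Fin n) F) :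
    Matrix.det (Matrix.of fun i j : Fin (n + 1) =>
        Fin.cases (x i ^ c) (fun k => M i k) j) =
      (∏ l, x l ^ c) * Matrix.det (Matrix.of fun i j : Fin n =>
        x i.succ ^ (-c) * M i.succ j - x i.castSucc ^ (-c) * M i.castSucc j) := by
  have key : (Matrix.of fun i j : Fin (n + 1) => Fin.cases (x i ^ c) (fun k => M i k) j)
      = Matrix.of (fun i j : Fin (n + 1) => x i ^ c *
          (Matrix.of fun i j : Fin (n + 1) =>
            Fin.cases (motive := fun _ => F) (1 : F) (fun k => x i ^ (-c) * M i k) j) i j) := by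
    ext i j
    induction j using Fin.cases with
    | zero => simp
    | succ k =>
      simp only [Matrix.of_apply, Fin.cases_succ, ← mul_assoc, ← zpow_add₀ (hx i)]
      simp
  rw [key, Matrix.det_mul_column]
  congr 1
  have h1 : ∀ i : Fin (n + 1),
      (Matrix.of fun i j : Fin (n + 1) =>
        Fin.cases (motive := fun _ => F) (1 : F) (fun k => x i ^ (-c) * M i k) j) i 0 = 1 := by
    intro i; simp
  rw [det_ones_col _ h1]
  congr 1

private lemma det_updateCol_sub {m : Type*} [DecidableEq m] [Fintype m] {F : Type*}
    [CommRing F] (M : Matrix m m F) (j : m) (u v : m → F) :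
    Matrix.det (M.updateCol j (u - v)) =
      Matrix.det (M.updateCol j u) - Matrix.det (M.updateCol j v) := by
  have h := Matrix.det_updateCol_add M j u (-v)
  have h2 := Matrix.det_updateCol_smul M j (-1 : F) v
  have : u - v = u + (-v) := sub_eq_add_neg u v
  rw [this, h]
  have : -v = (-1 : F) • v := by ext i; simp
  rw [this, h2]
  ring

/-- Column combination identity: for each fixed `r`,
`a_μ(x) = (-1)^{r-1} [ ∏_l x_l^{μ_r} det_{L-1}[x_{i+1}^{-μ_r}(x_{i+1}^{μ_j}-x_{i+1}^{-μ_j})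
 - x_i^{-μ_r}(x_i^{μ_j}-x_i^{-μ_j})] − ∏_l x_l^{-μ_r} det_{L-1}[…with +μ_r…] ]`,
rows `i = 1,…,L-1`, columns `j ∈ {1,…,L} \ {r}`. -/
theorem column_combination_identity (n : ℕ) (F : Type*) [Field F]
    (μ : Fin (n + 1) → ℕ) (hpos : ∀ i, 0 < μ i)
    (x : Fin (n + 1) → F) (hx : ∀ i, x i ≠ 0) (r : Fin (n + 1)) :
    Matrix.det (Matrix.of fun i j : Fin (n + 1) =>
        x i ^ ((μ j : ℤ)) - x i ^ (-(μ j : ℤ))) =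
      (-1 : F) ^ (r : ℕ) *
        ((∏ l : Fin (n + 1), x l ^ ((μ r : ℤ))) *
          Matrix.det (Matrix.of fun i j : Fin n =>
            x i.succ ^ (-(μ r : ℤ)) *
                (x i.succ ^ ((μ (r.succAbove j) : ℤ)) -
                  x i.succ ^ (-(μ (r.succAbove j) : ℤ))) -
              x i.castSucc ^ (-(μ r : ℤ)) *
                (x i.castSucc ^ ((μ (r.succAbove j) : ℤ)) -
                  x i.castSucc ^ (-(μ (r.succAbove j) : ℤ)))) -
          (∏ l : Fin (n + 1), x l ^ (-(μ r : ℤ))) *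
            Matrix.det (Matrix.of fun i j : Fin n =>
              x i.succ ^ ((μ r : ℤ)) *
                  (x i.succ ^ ((μ (r.succAbove j) : ℤ)) -
                    x i.succ ^ (-(μ (r.succAbove j) : ℤ))) -
                x i.castSucc ^ ((μ r : ℤ)) *
                  (x i.castSucc ^ ((μ (r.succAbove j) : ℤ)) -
                    x i.castSucc ^ (-(μ (r.succAbove j) : ℤ))))) := by
  set A : Matrix (Fin (n + 1)) (Fin (n + 1)) F :=
    Matrix.of fun i j : Fin (n + 1) => x i ^ ((μ j : ℤ)) - x i ^ (-(μ j : ℤ)) with hA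
  set σ : Equiv.Perm (Fin (n + 1)) := (Fin.cycleRange r).symm with hσ
  set A' : Matrix (Fin (n + 1)) (Fin (n + 1)) F := A.submatrix id σ with hA'
  -- Step 1: det A = (-1)^r * det A'
  have hperm : A'.det = (-1 : F) ^ (r : ℕ) * A.det := by
    rw [hA', Matrix.det_permute']
    congr 1
    have : Equiv.Perm.sign σ = Equiv.Perm.sign (Fin.cycleRange r) := by
      rw [hσ]; exact Equiv.Perm.sign_symm _
    rw [this, Fin.sign_cycleRange]
    push_cast
    ring
  have hstep1 : A.det = (-1 : F) ^ (r : ℕ) * A'.det := by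
    rw [hperm, ← mul_assoc, ← pow_add, ← two_mul, pow_mul]
    simp
  -- Step 2: multilinearity in column 0
  have hA'col : A' = A'.updateCol 0
      ((fun i => x i ^ ((μ r : ℤ))) - (fun i => x i ^ (-(μ r : ℤ)))) := by
    ext i j
    rw [Matrix.updateCol_apply]
    by_cases hj : j = 0
    · subst hj
      simp [hA', hσ, hA]
    · simp [hj]
  -- Step 3: identify updated matrices with the Fin.cases form
  have hPQ : ∀ c : ℤ, A'.updateCol 0 (fun i => x i ^ c) =
      Matrix.of (fun i j : Fin (n + 1) =>
        Fin.cases (x i ^ c) (fun k => A i (r.succAbove k)) j) := by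
    intro c
    ext i j
    induction j using Fin.cases with
    | zero => simp
    | succ k =>
      rw [Matrix.updateCol_apply]
      simp [hA', hσ, Fin.succ_ne_zero]
  have hdetP : ∀ c : ℤ, (A'.updateCol 0 (fun i => x i ^ c)).det =
      (∏ l, x l ^ c) * Matrix.det (Matrix.of fun i j : Fin n =>
        x i.succ ^ (-c) * A i.succ (r.succAbove j) -
          x i.castSucc ^ (-c) * A i.castSucc (r.succAbove j)) := by
    intro c
    rw [hPQ c]
    exact det_factor_col x hx c (Matrix.of fun i k => A i (r.succAbove k))
  calc A.det = (-1 : F) ^ (r : ℕ) * A'.det := hstep1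
    _ = _ := by
        rw [hA'col, det_updateCol_sub, hdetP ((μ r : ℤ)), hdetP (-(μ r : ℤ))]
        simp only [neg_neg]
        congr 2
end
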